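/- Let G = (V, E, w) be a finite connected weighted graph and T a minimum spanning tree of G. For every ε, the connected components of the subgraph of T with edges of weight ≤ ε coincide with the connected components of the subgraph of G with edges of weight ≤ ε. -/

import Mathlib

open SimpleGraph Finset

variable {V : Type*} {W : Type*} [AddCommMonoid W] [LinearOrder W] [IsOrderedAddMonoid W]

/-- The simple graph whose edges are a given finite set of (unordered) pairs. -/
def fromEdges (F : Finset (Sym2 V)) : SimpleGraph V := SimpleGraph.fromEdgeSet ↑F

/-- Two edge sets induce the same connected components (reachability). -/
def SameComponents (E F : Finset (Sym2 V)) : Prop :=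
  ∀ a b : V, (fromEdges E).Reachable a b ↔ (fromEdges F).Reachable a b

/-- `F` is a spanning forest of the graph with edge set `E`. -/
def IsSpanningForest (E F : Finset (Sym2 V)) : Prop :=
  F ⊆ E ∧ (fromEdges F).IsAcyclic ∧ SameComponents E F

/-- `F` is a minimum spanning forest of the graph with edge set `E` and weights `w`. -/
def IsMSF (E : Finset (Sym2 V)) (w : Sym2 V → W) (F : Finset (Sym2 V)) : Prop :=
  IsSpanningForest E F ∧ ∀ F', IsSpanningForest E F' → F.sum w ≤ F'.sum w

/-- `T` is a minimum spanning tree of the (connected) graph with edge set `E`. -/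
def IsMST (E : Finset (Sym2 V)) (w : Sym2 V → W) (T : Finset (Sym2 V)) : Prop :=
  IsMSF E w T ∧ (fromEdges T).Connected

section Aux

variable {V : Type*}

lemma fromEdges_adj {F : Finset (Sym2 V)} {a b : V} :
    (fromEdges F).Adj a b ↔ s(a, b) ∈ F ∧ a ≠ b := by
  simp [fromEdges, SimpleGraph.fromEdgeSet_adj]

lemma mem_edgeSet_fromEdges {F : Finset (Sym2 V)} {g : Sym2 V} :
    g ∈ (fromEdges F).edgeSet ↔ g ∈ F ∧ ¬g.IsDiag := by
  simp [fromEdges, SimpleGraph.edgeSet_fromEdgeSet]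

lemma reach_of_adj_reach {G H : SimpleGraph V}
    (h : ∀ x y : V, G.Adj x y → H.Reachable x y) {a b : V} (r : G.Reachable a b) :
    H.Reachable a b := by
  obtain ⟨p⟩ := r
  induction p with
  | nil => exact SimpleGraph.Reachable.refl _
  | cons h' _ ih => exact (h _ _ h').trans ih

lemma exchange [DecidableEq V] (E : Finset (Sym2 V)) (w : Sym2 V → ℝ)
    (T : Finset (Sym2 V)) (hTE : T ⊆ E) (hacyc : (fromEdges T).IsAcyclic)
    (hsc : SameComponents E T)
    (hmin : ∀ F', IsSpanningForest E F' → T.sum w ≤ F'.sum w)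
    {u v : V} (hne : u ≠ v) (heE : s(u, v) ∈ E) (heT : s(u, v) ∉ T)
    (p : (fromEdges T).Walk u v) (hp : p.IsPath) {f : Sym2 V} (hf : f ∈ p.edges) :
    w f ≤ w s(u, v) := by
  by_contra hlt
  push_neg at hlt
  revert hf hlt
  induction f using Sym2.ind with
  | _ x y =>
  intro hf hlt
  have hfes : s(x, y) ∈ (fromEdges T).edgeSet := p.edges_subset_edgeSet hf
  rw [mem_edgeSet_fromEdges] at hfes
  obtain ⟨hfT, hfd⟩ := hfes
  have hxy : x ≠ y := by simpa using hfd
  have hef : s(u, v) ≠ s(x, y) := fun h => heT (h ▸ hfT)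
  set F' : Finset (Sym2 V) := insert s(u, v) (T.erase s(x, y)) with hF'
  -- u and v are not reachable after deleting f from T
  have hK : ¬(fromEdges (T.erase s(x, y))).Reachable u v := by
    rintro ⟨q⟩
    obtain ⟨q', hq'⟩ := q.toPath
    have hsub : ∀ g ∈ q'.edges, g ∈ (fromEdges T).edgeSet := by
      intro g hg
      have := q'.edges_subset_edgeSet hg
      rw [mem_edgeSet_fromEdges] at this ⊢
      exact ⟨Finset.mem_of_mem_erase this.1, this.2⟩
    have huniq := (SimpleGraph.isAcyclic_iff_path_unique.mp hacyc)
      ⟨q'.transfer (fromEdges T) hsub, hq'.transfer hsub⟩ ⟨p, hp⟩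
    have hedges : (q'.transfer (fromEdges T) hsub).edges = p.edges := by
      rw [Subtype.ext_iff] at huniq
      exact congrArg SimpleGraph.Walk.edges huniq
    rw [q'.edges_transfer hsub] at hedges
    have : s(x, y) ∈ q'.edges := hedges ▸ hf
    have := q'.edges_subset_edgeSet this
    rw [mem_edgeSet_fromEdges] at this
    exact (Finset.notMem_erase _ _) this.1
  -- the graph F' minus e is the graph T minus f
  have hGeq1 : fromEdges F' \ SimpleGraph.fromEdgeSet {s(u, v)}
      = fromEdges (T.erase s(x, y)) := by
    ext a b
    simp only [SimpleGraph.sdiff_adj, fromEdges_adj, SimpleGraph.fromEdgeSet_adj,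
      Set.mem_singleton_iff, hF', Finset.mem_insert, Finset.mem_erase]
    constructor
    · rintro ⟨⟨h1 | h1, hab⟩, h2⟩
      · exact absurd ⟨h1, hab⟩ h2
      · exact ⟨h1, hab⟩
    · rintro ⟨⟨hnef, hmem⟩, hab⟩
      exact ⟨⟨Or.inr ⟨hnef, hmem⟩, hab⟩, fun h => heT (h.1 ▸ hmem)⟩
  -- F' is acyclic
  have hacyF' : (fromEdges F').IsAcyclic := by
    intro z c hc
    by_cases hce : s(u, v) ∈ c.edges
    · have := (SimpleGraph.adj_and_reachable_delete_edges_iff_exists_cycle.mpr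
        ⟨z, c, hc, hce⟩).2
      rw [← hGeq1] at hK
      exact hK this
    · have hsub : ∀ g ∈ c.edges, g ∈ (fromEdges T).edgeSet := by
        intro g hg
        have hg' := c.edges_subset_edgeSet hg
        rw [mem_edgeSet_fromEdges] at hg' ⊢
        rcases Finset.mem_insert.mp hg'.1 with h | h
        · exact absurd (h ▸ hg) hce
        · exact ⟨Finset.mem_of_mem_erase h, hg'.2⟩
      exact hacyc (c.transfer _ hsub) (hc.transfer hsub)
  -- x and y are reachable in F'
  have hRXY : (fromEdges F').Reachable x y := by
    have hpsub : ∀ g ∈ p.edges, g ∈ (fromEdges (insert s(u, v) T)).edgeSet := by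
      intro g hg
      have := p.edges_subset_edgeSet hg
      rw [mem_edgeSet_fromEdges] at this ⊢
      exact ⟨Finset.mem_insert_of_mem this.1, this.2⟩
    have hadj : (fromEdges (insert s(u, v) T)).Adj v u := by
      rw [fromEdges_adj, Sym2.eq_swap]
      exact ⟨Finset.mem_insert_self _ _, hne.symm⟩
    have hen : s(v, u) ∉ (p.transfer _ hpsub).edges := by
      rw [p.edges_transfer hpsub, Sym2.eq_swap]
      intro h
      have := p.edges_subset_edgeSet h
      rw [mem_edgeSet_fromEdges] at this
      exact heT this.1
    have hcyc : (SimpleGraph.Walk.cons hadj (p.transfer _ hpsub)).IsCycle :=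
      SimpleGraph.Path.cons_isCycle ⟨p.transfer _ hpsub, hp.transfer hpsub⟩ hadj hen
    have hfc : s(x, y) ∈ (SimpleGraph.Walk.cons hadj (p.transfer _ hpsub)).edges := by
      rw [SimpleGraph.Walk.edges_cons, p.edges_transfer hpsub]
      exact List.mem_cons_of_mem _ hf
    have hreach := (SimpleGraph.adj_and_reachable_delete_edges_iff_exists_cycle.mpr
      ⟨v, _, hcyc, hfc⟩).2
    have hGeq2 : fromEdges (insert s(u, v) T) \ SimpleGraph.fromEdgeSet {s(x, y)}
        = fromEdges F' := by
      ext a b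
      simp only [SimpleGraph.sdiff_adj, fromEdges_adj, SimpleGraph.fromEdgeSet_adj,
        Set.mem_singleton_iff, hF', Finset.mem_insert, Finset.mem_erase]
      constructor
      · rintro ⟨⟨h1 | h1, hab⟩, h2⟩
        · exact ⟨Or.inl h1, hab⟩
        · refine ⟨Or.inr ⟨fun h => h2 ⟨h, hab⟩, h1⟩, hab⟩
      · rintro ⟨h1 | ⟨hnef, h1⟩, hab⟩
        · exact ⟨⟨Or.inl h1, hab⟩, fun h => hef (h1 ▸ h.1)⟩
        · exact ⟨⟨Or.inr h1, hab⟩, fun h => hnef h.1⟩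
    rw [← hGeq2]
    exact hreach
  -- F' has the same components as E
  have hscF' : SameComponents E F' := by
    intro a b
    rw [hsc a b]
    constructor
    · refine reach_of_adj_reach (fun c d hcd => ?_)
      rw [fromEdges_adj] at hcd
      obtain ⟨hcd1, hcd2⟩ := hcd
      by_cases hcf : s(c, d) = s(x, y)
      · rcases Sym2.eq_iff.mp hcf with ⟨rfl, rfl⟩ | ⟨rfl, rfl⟩
        · exact hRXY
        · exact hRXY.symm
      · exact SimpleGraph.Adj.reachable
          (fromEdges_adj.mpr ⟨Finset.mem_insert_of_mem (Finset.mem_erase.mpr ⟨hcf, hcd1⟩), hcd2⟩)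
    · refine reach_of_adj_reach (fun c d hcd => ?_)
      rw [fromEdges_adj, hF'] at hcd
      obtain ⟨hcd1, hcd2⟩ := hcd
      rcases Finset.mem_insert.mp hcd1 with h | h
      · rcases Sym2.eq_iff.mp h with ⟨rfl, rfl⟩ | ⟨rfl, rfl⟩
        · exact ⟨p⟩
        · exact SimpleGraph.Reachable.symm ⟨p⟩
      · exact SimpleGraph.Adj.reachable
          (fromEdges_adj.mpr ⟨Finset.mem_of_mem_erase h, hcd2⟩)
  have hsf : IsSpanningForest E F' :=
    ⟨Finset.insert_subset heE ((Finset.erase_subset _ _).trans hTE), hacyF', hscF'⟩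
  have hle := hmin F' hsf
  have heF' : s(u, v) ∉ T.erase s(x, y) := fun h => heT (Finset.mem_of_mem_erase h)
  have h1 : F'.sum w = w s(u, v) + (T.erase s(x, y)).sum w := Finset.sum_insert heF'
  have h2 : w s(x, y) + (T.erase s(x, y)).sum w = T.sum w := Finset.add_sum_erase T w hfT
  rw [h1, ← h2] at hle
  linarith

end Aux

/-- A minimum spanning tree preserves the connectivity structure of every threshold
subgraph: for each `ε`, the components of `T` restricted to edges of weight `≤ ε`
coincide with those of `G` restricted to edges of weight `≤ ε`. -/
theorem mst_threshold_components {V : Type*} [Fintype V] [DecidableEq V]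
    (E : Finset (Sym2 V)) (w : Sym2 V → ℝ) (hconn : (fromEdges E).Connected)
    (T : Finset (Sym2 V)) (hT : IsMST E w T) :
    ∀ (ε : ℝ) (a b : V),
      (fromEdges (T.filter fun e => w e ≤ ε)).Reachable a b ↔
        (fromEdges (E.filter fun e => w e ≤ ε)).Reachable a b := by
  obtain ⟨⟨⟨hTE, hacyc, hsc⟩, hmin⟩, hTconn⟩ := hT
  intro ε a b
  constructor
  · intro h
    exact h.mono (SimpleGraph.fromEdgeSet_mono
      (by exact_mod_cast Finset.filter_subset_filter _ hTE))
  · refine reach_of_adj_reach (fun x y hxy => ?_)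
    rw [fromEdges_adj, Finset.mem_filter] at hxy
    obtain ⟨⟨hxyE, hxyw⟩, hxyne⟩ := hxy
    by_cases hxyT : s(x, y) ∈ T
    · exact SimpleGraph.Adj.reachable
        (fromEdges_adj.mpr ⟨Finset.mem_filter.mpr ⟨hxyT, hxyw⟩, hxyne⟩)
    · have hreach : (fromEdges T).Reachable x y :=
        (hsc x y).mp (SimpleGraph.Adj.reachable (fromEdges_adj.mpr ⟨hxyE, hxyne⟩))
      obtain ⟨q⟩ := hreach
      obtain ⟨p, hp⟩ := q.toPath
      have hsub : ∀ g ∈ p.edges, g ∈ (fromEdges (T.filter fun e => w e ≤ ε)).edgeSet := by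
        intro g hg
        have hwle : w g ≤ ε :=
          le_trans (exchange E w T hTE hacyc hsc hmin hxyne hxyE hxyT p hp hg) hxyw
        have := p.edges_subset_edgeSet hg
        rw [mem_edgeSet_fromEdges] at this ⊢
        exact ⟨Finset.mem_filter.mpr ⟨this.1, hwle⟩, this.2⟩
      exact ⟨p.transfer _ hsub⟩
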